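/- For n ≥ 2 and real numbers s_1 ≤ s_2 ≤ … ≤ s_n, the Vandermonde determinant satisfies the integration identity V_n(s_1,…,s_n) = (n−1)! ∫_{s_1}^{s_2} ∫_{s_2}^{s_3} … ∫_{s_{n−1}}^{s_n} V_{n−1}(σ_1,…,σ_{n−1}) dσ_{n−1} … dσ_1. -/

import Mathlib

open MeasureTheory

/-- The Vandermonde product `V_n(s) = ∏_{i<j} (s_j - s_i)`. -/
noncomputable def vand (n : ℕ) (s : Fin n → ℝ) : ℝ :=
  ∏ p ∈ Finset.univ.filter (fun p : Fin n × Fin n => p.1 < p.2), (s p.2 - s p.1)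

/-- The iterated integral `∫_{s_0}^{s_1} ⋯ ∫_{s_{k-1}}^{s_k} f(σ) dσ_{k-1} ⋯ dσ_0`,
where the `j`-th integration variable runs from `s j` to `s (j+1)`. -/
noncomputable def iterInt : (k : ℕ) → ((Fin k → ℝ) → ℝ) → (Fin (k + 1) → ℝ) → ℝ
  | 0, f, _ => f (fun i => i.elim0)
  | (k + 1), f, s =>
      ∫ x in (s 0)..(s 1), iterInt k (fun u => f (Fin.cons x u)) (fun i => s i.succ)

lemma vand_eq_det (n : ℕ) (s : Fin n → ℝ) : vand n s = (Matrix.vandermonde s).det := by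
  rw [Matrix.det_vandermonde, vand]
  rw [Finset.prod_filter, Fintype.prod_prod_type]
  refine Finset.prod_congr rfl fun i _ => ?_
  rw [← Finset.prod_filter]
  refine Finset.prod_congr ?_ fun _ _ => rfl
  ext j; simp

lemma vand_expand (n : ℕ) (σ : Fin n → ℝ) :
    vand n σ = ∑ τ : Equiv.Perm (Fin n),
      ((Equiv.Perm.sign τ : ℤ) : ℝ) * ∏ i, σ i ^ ((τ i : ℕ)) := by
  rw [vand_eq_det, ← Matrix.det_transpose, Matrix.det_apply]
  simp [Matrix.vandermonde, Units.smul_def, zsmul_eq_mul]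

lemma iterInt_sum_monomial {ι : Type} (T : Finset ι) :
    ∀ (k : ℕ) (c : ι → ℝ) (e : ι → Fin k → ℕ) (s : Fin (k+1) → ℝ),
    iterInt k (fun σ => ∑ τ ∈ T, c τ * ∏ j, σ j ^ e τ j) s
      = ∑ τ ∈ T, c τ * ∏ j, (s j.succ ^ (e τ j + 1) - s j.castSucc ^ (e τ j + 1))
          / ((e τ j : ℝ) + 1) := by
  intro k
  induction k with
  | zero => intro c e s; simp [iterInt]
  | succ k ih =>
    intro c e s
    rw [iterInt]
    have key : ∀ x : ℝ,
        iterInt k (fun u => ∑ τ ∈ T, c τ * ∏ j : Fin (k+1), (Fin.cons x u : Fin (k+1) → ℝ) j ^ e τ j)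
          (fun i => s i.succ)
        = ∑ τ ∈ T, (c τ * x ^ e τ 0) *
            ∏ j : Fin k, (s j.succ.succ ^ (e τ j.succ + 1) - s j.castSucc.succ ^ (e τ j.succ + 1))
              / ((e τ j.succ : ℝ) + 1) := by
      intro x
      have hfun : (fun u : Fin k → ℝ =>
          ∑ τ ∈ T, c τ * ∏ j : Fin (k+1), (Fin.cons x u : Fin (k+1) → ℝ) j ^ e τ j)
          = (fun u => ∑ τ ∈ T, (c τ * x ^ e τ 0) * ∏ j : Fin k, u j ^ e τ j.succ) := by
        funext u
        refine Finset.sum_congr rfl fun τ _ => ?_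
        rw [Fin.prod_univ_succ]
        simp [mul_assoc]
      rw [hfun, ih (fun τ => c τ * x ^ e τ 0) (fun τ j => e τ j.succ) (fun i => s i.succ)]
    simp_rw [key]
    rw [intervalIntegral.integral_finset_sum (fun τ _ =>
      (show Continuous (fun x : ℝ => c τ * x ^ e τ 0 * ∏ j : Fin k, (s j.succ.succ ^ (e τ j.succ + 1) - s j.castSucc.succ ^ (e τ j.succ + 1)) / ((e τ j.succ : ℝ) + 1)) by fun_prop).intervalIntegrable _ _)]
    refine Finset.sum_congr rfl fun τ _ => ?_
    rw [intervalIntegral.integral_mul_const, intervalIntegral.integral_const_mul, integral_pow,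
      Fin.prod_univ_succ]
    simp only [← Fin.succ_castSucc, Fin.castSucc_zero, Fin.succ_zero_eq_one]
    ring

/-- for `n ≥ 2` and `s_1 ≤ … ≤ s_n`,
`V_n(s) = (n-1)! ∫_{s_1}^{s_2} ⋯ ∫_{s_{n-1}}^{s_n} V_{n-1}(σ) dσ`. -/
theorem stmt2 (m : ℕ) (s : Fin (m + 2) → ℝ) (hs : Monotone s) :
    vand (m + 2) s = (Nat.factorial (m + 1)) * iterInt (m + 1) (vand (m + 1)) s := by
  classical
  -- Step 1: compute the iterated integral as a determinant
  set A : Matrix (Fin (m+1)) (Fin (m+1)) ℝ :=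
    Matrix.of fun i j => (s j.succ ^ ((i:ℕ)+1) - s j.castSucc ^ ((i:ℕ)+1)) / ((i:ℕ) + 1) with hA
  have hiter : iterInt (m + 1) (vand (m + 1)) s = A.det := by
    have h1 : (vand (m+1) : (Fin (m+1) → ℝ) → ℝ)
        = fun σ => ∑ τ : Equiv.Perm (Fin (m+1)), ((Equiv.Perm.sign τ : ℤ) : ℝ) * ∏ i, σ i ^ ((τ i : ℕ)) := by
      funext σ; exact vand_expand _ σ
    rw [h1, iterInt_sum_monomial (Finset.univ : Finset (Equiv.Perm (Fin (m+1)))) (m+1)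
      (fun τ => ((Equiv.Perm.sign τ : ℤ) : ℝ)) (fun τ i => ((τ i : ℕ))) s]
    rw [Matrix.det_apply]
    refine Finset.sum_congr rfl fun τ _ => ?_
    rw [Units.smul_def, zsmul_eq_mul]
    congr 1
  -- Step 2: scaled matrix B
  set B : Matrix (Fin (m+1)) (Fin (m+1)) ℝ :=
    Matrix.of fun i j => s j.succ ^ ((i:ℕ)+1) - s j.castSucc ^ ((i:ℕ)+1) with hB
  have hscale : B.det = (Nat.factorial (m+1) : ℝ) * A.det := by
    have : B = Matrix.of fun (i j : Fin (m+1)) => (((i:ℕ) : ℝ) + 1) * A i j := by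
      ext i j
      simp only [hA, hB, Matrix.of_apply]
      rw [mul_div_cancel₀]
      positivity
    rw [this, Matrix.det_mul_column]
    congr 1
    rw [Fin.prod_univ_eq_prod_range (fun i => ((i : ℝ) + 1)) (m+1)]
    rw [← Finset.prod_range_add_one_eq_factorial (m+1)]
    push_cast
    rfl
  -- Step 3: row operations on the Vandermonde matrix
  have hrow : vand (m+2) s = B.det := by
    rw [vand_eq_det]
    set N : Matrix (Fin (m+2)) (Fin (m+2)) ℝ :=
      Matrix.of fun i j => Fin.cases (s 0 ^ (j:ℕ))
        (fun i' : Fin (m+1) => s i'.succ ^ (j:ℕ) - s i'.castSucc ^ (j:ℕ)) i with hN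
    have h2 : (Matrix.vandermonde s).det = N.det := by
      refine Matrix.det_eq_of_forall_row_eq_smul_add_pred (fun _ => 1) (fun j => rfl) ?_
      intro i j
      simp only [hN, Matrix.of_apply, Matrix.vandermonde, Fin.cases_succ, one_mul]
      ring
    rw [h2, Matrix.det_succ_column_zero, Fin.sum_univ_succ]
    have h3 : ∀ i : Fin (m+1), (-1:ℝ) ^ ((i.succ : Fin (m+2)) : ℕ) * N i.succ 0 *
        (N.submatrix (Fin.succAbove i.succ) Fin.succ).det = 0 := by
      intro i
      simp [hN]
    rw [Finset.sum_congr rfl (fun i _ => h3 i), Finset.sum_const, smul_zero, add_zero]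
    have h4 : N 0 0 = 1 := by simp [hN]
    rw [h4]
    rw [show ((-1:ℝ) ^ (((0 : Fin (m+2)) : ℕ)) * 1 * (N.submatrix (Fin.succAbove 0) Fin.succ).det) = (N.submatrix (Fin.succAbove 0) Fin.succ).det by simp]
    have h5 : N.submatrix (Fin.succAbove 0) Fin.succ = B.transpose := by
      ext i j
      simp only [Matrix.submatrix_apply, Fin.succAbove_zero, hN, hB, Matrix.of_apply,
        Matrix.transpose_apply, Fin.cases_succ, Fin.val_succ, Fin.succ_castSucc]
    rw [h5, Matrix.det_transpose]
  rw [hrow, hscale, hiter]
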